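/- With the same setup, the exponential extension is the unique extension keeping the expected competitive ratio constant: if g agrees with f on {1,…,a−1} and α_g(x) = α_g(a−1) for all a ≤ x ≤ x', then g_x = (1 + 1/(n−1))^{x−a} g_a with g_a = (1/((a−1)(n−1))) Σ_{t=1}^{a−1}(n+t−1) g_t, for all a ≤ x ≤ x'. -/

import Mathlib

/-- Uniqueness of the constant-ratio extension: if α_g(x) = α_g(a−1) for all a ≤ x ≤ x',
then g_a = (1/((a−1)(n−1))) Σ_{t<a} (n+t−1) g_t and g_x = (1+1/(n−1))^{x−a} g_a. -/
theorem stmt_9 (n a x' : ℕ) (ha : 1 < a) (han : a < n) (hax : a ≤ x') (hx'n : x' ≤ n)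
    (g : ℕ → ℝ) (hsub : ∑ t ∈ Finset.Icc 1 (a - 1), g t < 1)
    (A : ℕ → ℝ)
    (hA : ∀ x, A x = ∑ t ∈ Finset.Icc 1 x, (((n:ℝ) + t - 1) / x) * g t
        + 1 - ∑ t ∈ Finset.Icc 1 x, g t)
    (hconst : ∀ x, a ≤ x → x ≤ x' → A x = A (a - 1)) :
    g a = (1 / (((a:ℝ) - 1) * ((n:ℝ) - 1)))
        * ∑ t ∈ Finset.Icc 1 (a - 1), ((n:ℝ) + t - 1) * g t ∧
    ∀ x, a ≤ x → x ≤ x' → g x = (1 + 1/((n:ℝ) - 1))^(x - a) * g a := by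
  have hn1 : (n:ℝ) - 1 ≠ 0 := by
    have : (2:ℝ) ≤ n := by exact_mod_cast (by omega : 2 ≤ n)
    linarith
  have hg : ∀ x, a ≤ x → x ≤ x' →
      g x * (((x:ℝ) - 1) * ((n:ℝ) - 1))
        = ∑ t ∈ Finset.Icc 1 (x-1), ((n:ℝ) + t - 1) * g t := by
    intro x haxx hxx'
    have key : A x = A (x - 1) := by
      rcases eq_or_lt_of_le haxx with h | h
      · rw [hconst x haxx hxx', ← h]
      · rw [hconst x haxx hxx', hconst (x-1) (by omega) (by omega)]
    obtain ⟨y, rfl⟩ : ∃ y, x = y + 1 := ⟨x - 1, by omega⟩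
    have hy0 : 1 ≤ y := by omega
    simp only [Nat.add_sub_cancel] at key ⊢
    rw [hA, hA] at key
    rw [Finset.sum_Icc_succ_top (by omega : 1 ≤ y + 1),
        Finset.sum_Icc_succ_top (by omega : 1 ≤ y + 1)] at key
    set S := ∑ t ∈ Finset.Icc 1 y, ((n:ℝ) + t - 1) * g t with hS
    have e1 : ∑ t ∈ Finset.Icc 1 y, (((n:ℝ) + t - 1) / ((y:ℝ)+1)) * g t
        = S / ((y:ℝ)+1) := by
      rw [hS, Finset.sum_div]
      exact Finset.sum_congr rfl (fun t _ => by ring)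
    have e2 : ∑ t ∈ Finset.Icc 1 y, (((n:ℝ) + t - 1) / ((y:ℝ))) * g t
        = S / ((y:ℝ)) := by
      rw [hS, Finset.sum_div]
      exact Finset.sum_congr rfl (fun t _ => by ring)
    push_cast at key ⊢
    rw [e1, e2] at key
    have hy : (0:ℝ) < y := by exact_mod_cast (by omega : 0 < y)
    have hy1 : ((y:ℝ)) + 1 ≠ 0 := by linarith
    field_simp at key
    linear_combination key
  constructor
  · have h := hg a le_rfl hax
    have ha1 : (a:ℝ) - 1 ≠ 0 := by
      have : (2:ℝ) ≤ a := by exact_mod_cast ha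
      linarith
    field_simp at h ⊢
    linarith [h]
  · intro x hx hx'
    induction x, hx using Nat.le_induction with
    | base => simp
    | succ x hax2 ih =>
      have ihx := ih (by omega)
      obtain ⟨y, rfl⟩ : ∃ y, x = y + 1 := ⟨x - 1, by omega⟩
      have h1 := hg (y+1) hax2 (by omega)
      have h2 := hg (y+1+1) (by omega) hx'
      simp only [Nat.add_sub_cancel] at h1 h2
      rw [Finset.sum_Icc_succ_top (by omega : 1 ≤ y+1), ← h1] at h2
      have hpow : y + 1 + 1 - a = (y + 1 - a) + 1 := by omega
      rw [hpow, pow_succ]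
      rw [ihx] at h2
      have hy1 : ((y:ℝ)) + 1 ≠ 0 := by positivity
      push_cast at h2
      have hc : (((y:ℝ)+1)*((n:ℝ)-1)) ≠ 0 := mul_ne_zero hy1 hn1
      have h3 : g (y+1+1) = ((1 + 1/((n:ℝ)-1))^(y+1-a) * g a * (((y:ℝ)+1-1)*((n:ℝ)-1))
          + ((n:ℝ) + ((y:ℝ)+1) - 1) * ((1 + 1/((n:ℝ)-1))^(y+1-a) * g a)) / (((y:ℝ)+1)*((n:ℝ)-1)) := by
        rw [eq_div_iff hc]
        linear_combination h2
      rw [h3]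
      field_simp
      ring
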